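/- arXiv:1801.00193 — 5 statements merged into one kernel-verified Lean document; each statement's English description precedes it below -/
import Mathlib

section
/- For any two partitions λ and μ, where μ has n parts, the exchange-number N(λ, μ+n) of the concatenated weight (λ₁,…,λ_m, μ₁+n,…,μ_n+n) is at most |μ|, the number of boxes of μ. -/
/-!  STATEMENT 0 (Lemma 3.1).  For partitions λ (m parts) and μ (n parts),
`N(λ, μ+n) ≤ |μ|`.

The exchange action `σᵢ·δ = (…, δ_{i+1}−1, δ_i+1, …)` corresponds, under the shift
`τᵢ = δᵢ − i`, to the plain transposition of `τᵢ, τ_{i+1}`.  Hence `N(δ)` is finite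
(i.e. `≠ −∞`) iff the shifted sequence `τ` is injective, in which case `N(δ)` equals
the number of inversions, i.e. the number of pairs `i < j` with `τᵢ < τⱼ`. -/

/-- The exchange number `N(δ)` of a weight: the number of pairs `i < j` with
`δ i - i < δ j - j` (the length of the permutation sorting `δ` into a
non-increasing weight under the exchange action). -/
def exchNum {n : ℕ} (δ : Fin n → ℤ) : ℕ :=
  (Finset.univ.filter (fun p : Fin n × Fin n =>
    p.1 < p.2 ∧ δ p.1 - (p.1 : ℤ) < δ p.2 - (p.2 : ℤ))).card

/-- `N(δ) ≠ -∞`: some permutation makes `δ` non-increasing under the exchange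
action; equivalently the shifted sequence `i ↦ δ i - i` is injective. -/
def Sortable {n : ℕ} (δ : Fin n → ℤ) : Prop :=
  Function.Injective (fun i : Fin n => δ i - (i : ℤ))

theorem stmt_0 {m n : ℕ} (lam : Fin m → ℕ) (mu : Fin n → ℕ)
    (hlam : Antitone lam) (hmu : Antitone mu)
    (δ : Fin (m + n) → ℤ)
    (hδ : δ = Fin.append (fun i => (lam i : ℤ)) (fun j => (mu j : ℤ) + (n : ℤ)))
    (hsort : Sortable δ) :
    exchNum δ ≤ ∑ j, mu j := by
  classical
  -- evaluation of δ on the two blocks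
  have hL : ∀ (k : Fin (m + n)) (h : k.val < m), δ k = lam ⟨k.val, h⟩ := by
    intro k h
    have hk : k = Fin.castAdd n ⟨k.val, h⟩ := by ext; simp
    have h1 : δ (Fin.castAdd n ⟨k.val, h⟩) = lam ⟨k.val, h⟩ := by
      rw [hδ]; exact Fin.append_left _ _ _
    exact (congrArg δ hk).trans h1
  have hR : ∀ (k : Fin (m + n)) (h : m ≤ k.val),
      δ k = (mu ⟨k.val - m, by have := k.isLt; omega⟩ : ℤ) + n := by
    intro k h
    have hk : k = Fin.natAdd m ⟨k.val - m, by have := k.isLt; omega⟩ := by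
      ext; simp; omega
    have h1 : δ (Fin.natAdd m ⟨k.val - m, by have := k.isLt; omega⟩)
        = (mu ⟨k.val - m, by have := k.isLt; omega⟩ : ℤ) + n := by
      rw [hδ]; exact Fin.append_right _ _ _
    exact (congrArg δ hk).trans h1
  -- shifted μ-sequence
  set b : Fin n → ℤ := fun j => (mu j : ℤ) + n - j with hb
  have hbanti : ∀ {j j' : Fin n}, j < j' → b j' < b j := by
    intro j j' h
    have h1 : mu j' ≤ mu j := hmu h.le
    have h2 : (j : ℕ) < (j' : ℕ) := h
    simp only [hb]
    omega
  have hbinj : ∀ {j j' : Fin n}, b j = b j' → j = j' := by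
    intro j j' h
    rcases lt_trichotomy j j' with hc | hc | hc
    · exact absurd h (hbanti hc).ne'
    · exact hc
    · exact absurd h (hbanti hc).ne
  -- shifted λ-values never meet shifted μ-values
  have hab : ∀ (i : Fin m) (j : Fin n), (lam i : ℤ) + m - i ≠ b j := by
    intro i j hEq
    have h1 : δ (Fin.castAdd n i) - ((Fin.castAdd n i : Fin (m+n)) : ℤ)
        = δ (Fin.natAdd m j) - ((Fin.natAdd m j : Fin (m+n)) : ℤ) := by
      have e1 : δ (Fin.castAdd n i) = lam i := by
        rw [hδ, Fin.append_left]
      have e2 : δ (Fin.natAdd m j) = (mu j : ℤ) + n := by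
        rw [hδ, Fin.append_right]
      rw [e1, e2]
      have c1 : (Fin.castAdd n i).val = (i : ℕ) := rfl
      have c2 : (Fin.natAdd m j).val = m + (j : ℕ) := rfl
      rw [c1, c2]
      simp only [hb] at hEq
      push_cast
      omega
    have h2 := hsort h1
    have h3 : (Fin.castAdd n i).val = (Fin.natAdd m j).val := by rw [h2]
    simp at h3
    omega
  -- the target set
  set T : Finset (ℕ × ℤ) := Finset.univ.biUnion (fun j : Fin n =>
    (Finset.Icc (1:ℤ) (b j - 1) \ (Finset.Ioi j).image b).image
      (fun t => ((j : ℕ), t))) with hT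
  set f : Fin (m+n) × Fin (m+n) → ℕ × ℤ :=
    fun p => (p.2.val - m, δ p.1 - (p.1 : ℤ) + m) with hf
  set S := (Finset.univ.filter (fun p : Fin (m+n) × Fin (m+n) =>
    p.1 < p.2 ∧ δ p.1 - (p.1 : ℤ) < δ p.2 - (p.2 : ℤ))) with hS
  -- every inversion pair crosses the blocks
  have hcross : ∀ p ∈ S, p.1.val < m ∧ m ≤ p.2.val := by
    intro p hp
    simp only [hS, Finset.mem_filter, Finset.mem_univ, true_and] at hp
    obtain ⟨hlt, hinv⟩ := hp
    have hlt' : p.1.val < p.2.val := hlt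
    constructor
    · by_contra hcon
      push_neg at hcon
      have h2 : m ≤ p.2.val := le_trans hcon hlt'.le
      rw [hR p.1 hcon, hR p.2 h2] at hinv
      have hmu' : mu ⟨p.2.val - m, by have := p.2.isLt; omega⟩
          ≤ mu ⟨p.1.val - m, by have := p.1.isLt; omega⟩ := by
        apply hmu
        exact Fin.mk_le_mk.mpr (by omega)
      omega
    · by_contra hcon
      push_neg at hcon
      have h1 : p.1.val < m := lt_trans hlt' hcon
      rw [hL p.1 h1, hL p.2 hcon] at hinv
      have hlam' : lam ⟨p.2.val, hcon⟩ ≤ lam ⟨p.1.val, h1⟩ := by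
        apply hlam
        exact Fin.mk_le_mk.mpr (by omega)
      omega
  -- f maps S into T
  have hmaps : ∀ p ∈ S, f p ∈ T := by
    intro p hp
    obtain ⟨h1m, h2m⟩ := hcross p hp
    simp only [hS, Finset.mem_filter, Finset.mem_univ, true_and] at hp
    obtain ⟨hlt, hinv⟩ := hp
    set j : Fin n := ⟨p.2.val - m, by have := p.2.isLt; omega⟩ with hj
    rw [hT, Finset.mem_biUnion]
    refine ⟨j, Finset.mem_univ j, ?_⟩
    rw [Finset.mem_image]
    refine ⟨δ p.1 - (p.1 : ℤ) + m, ?_, ?_⟩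
    · rw [Finset.mem_sdiff]
      have eδ1 : δ p.1 = lam ⟨p.1.val, h1m⟩ := hL p.1 h1m
      have eδ2 : δ p.2 = (mu j : ℤ) + n := hR p.2 h2m
      have c1 : ((p.1 : Fin (m+n)) : ℤ) = (p.1.val : ℤ) := rfl
      have c2 : ((p.2 : Fin (m+n)) : ℤ) = (p.2.val : ℤ) := rfl
      have hjval : (j : ℕ) = p.2.val - m := rfl
      have hval : δ p.1 - (p.1 : ℤ) + m = (lam ⟨p.1.val, h1m⟩ : ℤ) + m - p.1.val := by
        rw [eδ1, c1]; ring
      constructor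
      · rw [Finset.mem_Icc]
        constructor
        · rw [hval]
          have : (0:ℤ) ≤ (lam ⟨p.1.val, h1m⟩ : ℤ) := Int.natCast_nonneg _
          omega
        · -- strict inequality gives ≤ b j - 1
          have hb2 : δ p.2 - (p.2 : ℤ) = b j - m := by
            rw [eδ2, c2]
            simp only [hb]
            have : ((j : ℕ) : ℤ) = (p.2.val : ℤ) - m := by
              rw [hjval]; omega
            rw [this]
            ring
          have : δ p.1 - (p.1 : ℤ) + m < b j := by omega
          omega
      · rw [Finset.mem_image]
        rintro ⟨j'', _, hbj⟩
        apply hab ⟨p.1.val, h1m⟩ j''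
        show (lam ⟨p.1.val, h1m⟩ : ℤ) + m - (p.1.val : ℤ) = b j''
        rw [← hval]
        exact hbj.symm
    · rfl
  -- f is injective on S
  have hinj : Set.InjOn f S := by
    intro p hp q hq hpq
    obtain ⟨_, h2p⟩ := hcross p hp
    obtain ⟨_, h2q⟩ := hcross q hq
    simp only [hf, Prod.mk.injEq] at hpq
    obtain ⟨hfst, hsnd⟩ := hpq
    have e1 : p.1 = q.1 := by
      apply hsort
      show δ p.1 - (p.1 : ℤ) = δ q.1 - (q.1 : ℤ)
      omega
    have e2 : p.2 = q.2 := by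
      apply Fin.val_injective
      omega
    exact Prod.ext e1 e2
  -- the cardinality of T
  have hTcard : T.card ≤ ∑ j, mu j := by
    refine le_trans (Finset.card_biUnion_le) ?_
    apply Finset.sum_le_sum
    intro j _
    refine le_trans (Finset.card_image_le) ?_
    have hsub : (Finset.Ioi j).image b ⊆ Finset.Icc (1:ℤ) (b j - 1) := by
      intro t ht
      rw [Finset.mem_image] at ht
      obtain ⟨j'', hj'', rfl⟩ := ht
      rw [Finset.mem_Ioi] at hj''
      have h1 : b j'' < b j := hbanti hj''
      have h2 : (0:ℤ) ≤ mu j'' := Int.natCast_nonneg _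
      have h3 : (j'' : ℕ) < n := j''.isLt
      rw [Finset.mem_Icc]
      constructor
      · simp only [hb]; omega
      · omega
    rw [Finset.card_sdiff_of_subset hsub]
    have hicc : (Finset.Icc (1:ℤ) (b j - 1)).card = mu j + n - 1 - j := by
      rw [Int.card_Icc]
      simp only [hb]
      have : (j : ℕ) < n := j.isLt
      omega
    have himg : ((Finset.Ioi j).image b).card = n - 1 - j := by
      rw [Finset.card_image_of_injOn (fun x _ y _ h => hbinj h)]
      exact Fin.card_Ioi j
    rw [hicc, himg]
    have : (j : ℕ) < n := j.isLt
    omega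
  calc exchNum δ = S.card := rfl
    _ ≤ T.card := Finset.card_le_card_of_injOn f hmaps hinj
    _ ≤ ∑ j, mu j := hTcard
end

section
/- For any two partitions λ and μ, the exchange-number N(−λ, μ) of the concatenated weight (−λ_m,…,−λ₁, μ₁,…,μ_n) satisfies N(−λ,μ) ≤ |λ⁺| + |μ⁺| + u_λ·u_μ, where u_λ, u_μ are the Durfee square sizes and λ⁺, μ⁺ are the parts of the Young diagrams to the right of the Durfee squares. -/
open Finset


/-- The Durfee square size of a partition `λ` (a non-increasing sequence of
naturals): the number of indices `i` (0-indexed) with `λ_i ≥ i+1`, i.e. the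
largest `u` with `λ_u ≥ u` (1-indexed). -/
def durfee {n : ℕ} (lam : Fin n → ℕ) : ℕ :=
  (Finset.univ.filter (fun i : Fin n => (i : ℕ) + 1 ≤ lam i)).card

/-- `|λ⁺|`: the number of boxes to the right of the Durfee square,
`∑_{i < u_λ} (λ_i − u_λ)`. -/
def plusSum {n : ℕ} (lam : Fin n → ℕ) : ℕ :=
  ∑ i ∈ Finset.univ.filter (fun i : Fin n => (i : ℕ) + 1 ≤ lam i), (lam i - durfee lam)


def xfun {m : ℕ} (lam : Fin m → ℕ) (a : Fin m) : ℤ := (lam a : ℤ) - (a.val + 1)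

/-- conjugate partition entry -/
def conj {m : ℕ} (lam : Fin m → ℕ) (c : ℕ) : ℕ := (univ.filter fun a => c ≤ lam a).card

theorem card_val_lt (m t : ℕ) (h : t ≤ m) :
    (univ.filter fun a : Fin m => a.val < t).card = t := by
  rw [← Fintype.card_fin t]
  symm
  apply Finset.card_nbij (i := fun a : Fin t => Fin.castLE h a)
  · intro a _; simpa [Fin.castLE] using a.isLt
  · intro a _ b _ hab; exact Fin.castLE_injective h hab
  · intro b hb
    simp only [Fintype.card_fin, mem_coe, mem_filter] at hb
    exact ⟨⟨b.val, hb.2⟩, by simp, rfl⟩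

theorem xfun_anti {m : ℕ} {lam : Fin m → ℕ} (hlam : Antitone lam) :
    ∀ a b : Fin m, a ≤ b → xfun lam b ≤ xfun lam a := by
  intro a b hab
  have := hlam hab
  have : (lam b : ℤ) ≤ lam a := by exact_mod_cast this
  have hv : (a.val : ℤ) ≤ b.val := by exact_mod_cast hab
  simp only [xfun]; omega

/-- downward closed filters are initial segments -/
theorem filter_eq_initial {m : ℕ} (P : Fin m → Prop) [DecidablePred P]
    (hdc : ∀ a b : Fin m, a ≤ b → P b → P a) :
    univ.filter P = univ.filter (fun a => a.val < (univ.filter P).card) := by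
  ext a
  simp only [mem_filter, mem_univ, true_and]
  constructor
  · intro ha
    have hsub : Finset.Iic a ⊆ univ.filter P := by
      intro b hb
      simp only [mem_Iic] at hb
      simp only [mem_filter, mem_univ, true_and]
      exact hdc b a hb ha
    have := Finset.card_le_card hsub
    rw [Fin.card_Iic] at this
    omega
  · intro ha
    by_contra hna
    have hsub : univ.filter P ⊆ univ.filter (fun b : Fin m => b.val < a.val) := by
      intro b hb
      simp only [mem_filter, mem_univ, true_and] at hb ⊢
      by_contra hba
      exact hna (hdc a b (by omega) hb)
    have := Finset.card_le_card hsub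
    rw [card_val_lt m a.val (le_of_lt a.isLt)] at this
    omega

theorem durfee_le {m : ℕ} (lam : Fin m → ℕ) : durfee lam ≤ m := by
  have := Finset.card_filter_le (univ : Finset (Fin m)) (fun i => (i : ℕ) + 1 ≤ lam i)
  simpa [durfee] using this

theorem durfee_filter_eq {m : ℕ} {lam : Fin m → ℕ} (hlam : Antitone lam) :
    univ.filter (fun i : Fin m => (i : ℕ) + 1 ≤ lam i)
      = univ.filter (fun a => a.val < durfee lam) := by
  have hdc : ∀ a b : Fin m, a ≤ b → (b : ℕ) + 1 ≤ lam b → (a : ℕ) + 1 ≤ lam a := by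
    intro a b hab hb
    have := hlam hab
    have hv : a.val ≤ b.val := hab
    omega
  exact filter_eq_initial _ hdc

theorem lam_ge_of_lt_durfee {m : ℕ} {lam : Fin m → ℕ} (hlam : Antitone lam)
    (a : Fin m) (h : a.val < durfee lam) : durfee lam ≤ lam a := by
  have hu : durfee lam ≤ m := durfee_le lam
  set u := durfee lam with hu'
  have h1 : 1 ≤ u := by omega
  set b : Fin m := ⟨u - 1, by omega⟩ with hb
  have hab : a ≤ b := by
    show a.val ≤ b.val
    simp only [hb]; omega
  have hbD : b ∈ univ.filter (fun a : Fin m => a.val < u) := by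
    simp only [mem_filter, mem_univ, true_and, hb]; omega
  rw [← durfee_filter_eq hlam] at hbD
  simp only [mem_filter, mem_univ, true_and] at hbD
  have h2 := hlam hab
  have hbv : b.val = u - 1 := rfl
  omega

theorem lam_le_of_ge_durfee {m : ℕ} {lam : Fin m → ℕ} (hlam : Antitone lam)
    (a : Fin m) (h : durfee lam ≤ a.val) : lam a ≤ durfee lam := by
  have hu : durfee lam ≤ m := durfee_le lam
  set u := durfee lam with hu'
  have hum : u < m := lt_of_le_of_lt h a.isLt
  set b : Fin m := ⟨u, hum⟩ with hb
  have hba : b ≤ a := h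
  have hbD : b ∉ univ.filter (fun a : Fin m => a.val < u) := by
    simp [hb]
  rw [← durfee_filter_eq hlam] at hbD
  simp only [mem_filter, mem_univ, true_and, not_le] at hbD
  have h2 := hlam hba
  have hbv : b.val = u := rfl
  omega

theorem conj_ge {m : ℕ} {lam : Fin m → ℕ} (hlam : Antitone lam)
    {c : ℕ} (h : c ≤ durfee lam) : c ≤ conj lam c := by
  have hu : durfee lam ≤ m := durfee_le lam
  have hsub : univ.filter (fun a : Fin m => a.val < c) ⊆ univ.filter fun a => c ≤ lam a := by
    intro a ha
    simp only [mem_filter, mem_univ, true_and] at ha ⊢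
    have := lam_ge_of_lt_durfee hlam a (by omega)
    omega
  have := Finset.card_le_card hsub
  rwa [card_val_lt m c (by omega)] at this

theorem count_le_conj {m : ℕ} {lam : Fin m → ℕ} (hlam : Antitone lam)
    (c : ℕ) (hc : 1 ≤ c) :
    (univ.filter fun a : Fin m => (c : ℤ) - conj lam c ≤ xfun lam a).card ≤ conj lam c := by
  apply Finset.card_le_card
  intro a ha
  simp only [mem_filter, mem_univ, true_and] at ha ⊢
  by_contra hcon
  push_neg at hcon
  -- lam a ≤ c - 1, so conj c ≤ a.val
  have hsub : univ.filter (fun b : Fin m => c ≤ lam b)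
      ⊆ univ.filter (fun b : Fin m => b.val < a.val) := by
    intro b hb
    simp only [mem_filter, mem_univ, true_and] at hb ⊢
    by_contra hba
    have := hlam (show a ≤ b by omega)
    omega
  have h2 := Finset.card_le_card hsub
  rw [card_val_lt m a.val (le_of_lt a.isLt)] at h2
  have h3 : (conj lam c : ℤ) ≤ a.val := by exact_mod_cast h2
  have h4 : (lam a : ℤ) ≤ (c : ℤ) - 1 := by exact_mod_cast Nat.le_sub_one_of_lt hcon
  simp only [xfun] at ha
  omega

theorem maya {m : ℕ} {lam : Fin m → ℕ} (hlam : Antitone lam)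
    (v : ℕ) (hv : ∀ a : Fin m, xfun lam a ≠ (v : ℤ)) :
    ∃ c : ℕ, 1 ≤ c ∧ (conj lam c : ℤ) - c = -((v : ℤ) + 1) := by
  classical
  set K := univ.filter (fun a : Fin m => (v : ℤ) + 1 ≤ xfun lam a) with hK
  set k := K.card with hk
  have hkm : k ≤ m := by
    have := Finset.card_filter_le (univ : Finset (Fin m))
      (fun a : Fin m => (v : ℤ) + 1 ≤ xfun lam a)
    simpa [hk, hK] using this
  have hKeq : K = univ.filter (fun a : Fin m => a.val < k) := by
    rw [hK]
    exact filter_eq_initial _ (fun a b hab hb => le_trans hb (xfun_anti hlam a b hab))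
  refine ⟨v + 1 + k, by omega, ?_⟩
  have hconj : conj lam (v + 1 + k) = k := by
    have : univ.filter (fun a : Fin m => v + 1 + k ≤ lam a)
        = univ.filter (fun a : Fin m => a.val < k) := by
      ext a
      simp only [mem_filter, mem_univ, true_and]
      constructor
      · intro ha
        by_contra hna
        push_neg at hna
        have hbm : k < m := lt_of_le_of_lt hna a.isLt
        set b : Fin m := ⟨k, hbm⟩ with hb
        have hbK : b ∉ K := by
          rw [hKeq]; simp [hb]
        rw [hK] at hbK
        simp only [mem_filter, mem_univ, true_and, not_le] at hbK
        have hbne := hv b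
        have hxb : xfun lam b ≤ (v : ℤ) - 1 := by omega
        have h2 := hlam (show b ≤ a from hna)
        have hbv : b.val = k := rfl
        simp only [xfun] at hxb
        have : (lam b : ℤ) ≤ v + k := by omega
        have : (lam a : ℤ) ≤ v + k := by
          have : (lam a : ℤ) ≤ lam b := by exact_mod_cast h2
          omega
        have : (v : ℤ) + 1 + k ≤ lam a := by exact_mod_cast ha
        omega
      · intro ha
        have hk1 : 1 ≤ k := by omega
        set b : Fin m := ⟨k - 1, by omega⟩ with hb
        have hbK : b ∈ K := by
          rw [hKeq]
          simp only [mem_filter, mem_univ, true_and, hb]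
          omega
        rw [hK] at hbK
        simp only [mem_filter, mem_univ, true_and] at hbK
        have h2 := hlam (show a ≤ b from by show a.val ≤ b.val; simp [hb]; omega)
        have hbv : (b.val : ℤ) = (k : ℤ) - 1 := by
          have : b.val = k - 1 := rfl
          omega
        simp only [xfun] at hbK
        have : (v : ℤ) + 1 + k ≤ lam b := by omega
        have h3 : (lam b : ℤ) ≤ lam a := by exact_mod_cast h2
        have : (v : ℤ) + 1 + k ≤ (lam a : ℤ) := by omega
        exact_mod_cast this
    rw [conj, this, card_val_lt m k hkm]
  rw [hconj]
  push_cast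
  ring

theorem conj_eq_zero {m : ℕ} (lam : Fin m → ℕ) {c : ℕ} (h : univ.sup lam < c) :
    conj lam c = 0 := by
  rw [conj, Finset.card_eq_zero, Finset.filter_eq_empty_iff]
  intro a _
  have := Finset.le_sup (f := lam) (Finset.mem_univ a)
  omega

theorem plusSum_eq {m : ℕ} {lam : Fin m → ℕ} (hlam : Antitone lam) :
    plusSum lam = ∑ c ∈ Finset.Ioc (durfee lam) (univ.sup lam), conj lam c := by
  classical
  set u := durfee lam with hu
  set L := univ.sup lam with hL
  rw [plusSum]
  have step1 : ∀ a ∈ univ.filter (fun i : Fin m => (i : ℕ) + 1 ≤ lam i),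
      lam a - u = ((Finset.Ioc u L).filter (fun c => c ≤ lam a)).card := by
    intro a _
    have hlamL : lam a ≤ L := Finset.le_sup (Finset.mem_univ a)
    have : (Finset.Ioc u L).filter (fun c => c ≤ lam a) = Finset.Ioc u (lam a) := by
      ext c
      simp only [mem_filter, Finset.mem_Ioc]
      omega
    rw [this, Nat.card_Ioc]
  rw [Finset.sum_congr rfl step1]
  simp only [Finset.card_filter]
  rw [Finset.sum_comm]
  apply Finset.sum_congr rfl
  intro c hc
  simp only [Finset.mem_Ioc] at hc
  rw [← Finset.card_filter]
  rw [conj]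
  congr 1
  rw [Finset.filter_filter]
  apply Finset.filter_congr
  intro a _
  rw [and_iff_right_iff_imp]
  intro hca
  -- c ≤ lam a and u < c imply a+1 ≤ lam a
  by_contra hna
  push_neg at hna
  have haval : u ≤ a.val := by
    by_contra hlt
    push_neg at hlt
    have := lam_ge_of_lt_durfee hlam a hlt
    -- lam a ≥ u but also a.val < u so a.val+1 ≤ u ≤ lam a, contradiction with hna
    omega
  have := lam_le_of_ge_durfee hlam a haval
  omega

theorem crossB {m n : ℕ} {lam : Fin m → ℕ} {mu : Fin n → ℕ}
    (hlam : Antitone lam) (hmu : Antitone mu)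
    (H : ∀ (a : Fin m) (q : Fin n), xfun lam a + xfun mu q ≠ -1) :
    ∑ q ∈ univ.filter (fun q : Fin n => xfun mu q < 0),
      (univ.filter fun a : Fin m => 0 ≤ xfun lam a + xfun mu q).card ≤ plusSum lam := by
  classical
  set u := durfee lam with hu
  set L := univ.sup lam with hL
  set Q := univ.filter (fun q : Fin n => xfun mu q < 0) with hQ
  -- the function choosing c for each q
  have hex : ∀ q ∈ Q, ∃ c : ℕ, 1 ≤ c ∧ (conj lam c : ℤ) - c = xfun mu q := by
    intro q hq
    simp only [hQ, mem_filter, mem_univ, true_and] at hq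
    set v : ℕ := (-1 - xfun mu q).toNat with hv
    have hvz : (v : ℤ) = -1 - xfun mu q := Int.toNat_of_nonneg (by omega)
    have hne : ∀ a : Fin m, xfun lam a ≠ (v : ℤ) := by
      intro a hc
      exact H a q (by omega)
    obtain ⟨c, hc1, hc2⟩ := maya hlam v hne
    exact ⟨c, hc1, by omega⟩
  set C : Fin n → ℕ := fun q => if hq : q ∈ Q then (hex q hq).choose else 0 with hC
  have hC1 : ∀ q ∈ Q, 1 ≤ C q := by
    intro q hq; simp only [hC, dif_pos hq]; exact (hex q hq).choose_spec.1
  have hC2 : ∀ q ∈ Q, (conj lam (C q) : ℤ) - C q = xfun mu q := by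
    intro q hq; simp only [hC, dif_pos hq]; exact (hex q hq).choose_spec.2
  -- termwise bound
  have step1 : ∑ q ∈ Q, (univ.filter fun a : Fin m => 0 ≤ xfun lam a + xfun mu q).card
      ≤ ∑ q ∈ Q, conj lam (C q) := by
    apply Finset.sum_le_sum
    intro q hq
    have h2 := hC2 q hq
    have : (univ.filter fun a : Fin m => 0 ≤ xfun lam a + xfun mu q)
        = univ.filter fun a : Fin m => (C q : ℤ) - conj lam (C q) ≤ xfun lam a := by
      apply Finset.filter_congr
      intro a _
      constructor
      · intro h; omega
      · intro h; omega
    rw [this]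
    exact count_le_conj hlam (C q) (hC1 q hq)
  refine le_trans step1 ?_
  -- sum over image
  have hinj : Set.InjOn C Q := by
    intro q1 h1 q2 h2 heq
    have e1 := hC2 q1 h1
    have e2 := hC2 q2 h2
    rw [heq] at e1
    have : xfun mu q1 = xfun mu q2 := by omega
    by_contra hne
    rcases lt_or_gt_of_ne (show q1 ≠ q2 from hne) with h | h
    · have hval : (q1.val : ℤ) < q2.val := by exact_mod_cast h
      have hm : (mu q2 : ℤ) ≤ mu q1 := by exact_mod_cast hmu (le_of_lt h)
      simp only [xfun] at this
      omega
    · have hval : (q2.val : ℤ) < q1.val := by exact_mod_cast h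
      have hm : (mu q1 : ℤ) ≤ mu q2 := by exact_mod_cast hmu (le_of_lt h)
      simp only [xfun] at this
      omega
  rw [← Finset.sum_image (fun q h1 q' h2 heq => hinj h1 h2 heq)]
  -- image is inside Ioc u L up to zero terms
  have himg : ∀ c ∈ Q.image C, u < c := by
    intro c hc
    rw [Finset.mem_image] at hc
    obtain ⟨q, hq, rfl⟩ := hc
    have h2 := hC2 q hq
    have hq' : xfun mu q < 0 := by
      simp only [hQ, mem_filter, mem_univ, true_and] at hq; exact hq
    have hlt : (conj lam (C q) : ℤ) < C q := by omega
    by_contra hna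
    push_neg at hna
    have := conj_ge hlam (show C q ≤ durfee lam from hna)
    have : ((C q : ℕ) : ℤ) ≤ conj lam (C q) := by exact_mod_cast this
    omega
  rw [← Finset.sum_inter_add_sum_sdiff (Q.image C) (Finset.Ioc u L) (conj lam)]
  have hdiff : ∑ c ∈ Q.image C \ Finset.Ioc u L, conj lam c = 0 := by
    apply Finset.sum_eq_zero
    intro c hc
    rw [Finset.mem_sdiff, Finset.mem_Ioc] at hc
    have h1 := himg c hc.1
    have h2 : L < c := by
      rcases hc with ⟨_, hnot⟩
      omega
    exact conj_eq_zero lam h2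
  rw [hdiff, add_zero, plusSum_eq hlam, ← hu, ← hL]
  apply Finset.sum_le_sum_of_subset
  exact Finset.inter_subset_right


set_option maxHeartbeats 1600000 in
theorem stmt_1 {m n : ℕ} (lam : Fin m → ℕ) (mu : Fin n → ℕ)
    (hlam : Antitone lam) (hmu : Antitone mu)
    (δ : Fin (m + n) → ℤ)
    (hδ : δ = Fin.append (fun i => -(lam (Fin.rev i) : ℤ)) (fun j => (mu j : ℤ)))
    (hsort : Sortable δ) :
    exchNum δ ≤ plusSum lam + plusSum mu + durfee lam * durfee mu := by
  classical
  have evalL : ∀ (p : Fin m), δ (Fin.castAdd n p) = -(lam p.rev : ℤ) := by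
    intro p; rw [hδ, Fin.append_left]
  have evalR : ∀ (p : Fin n), δ (Fin.natAdd m p) = (mu p : ℤ) := by
    intro p; rw [hδ, Fin.append_right]
  have revval : ∀ a : Fin m, (Fin.rev a).val = m - (a.val + 1) := fun a => Fin.val_rev a
  have finz : ∀ i : Fin (m + n), (i : ℤ) = (i.val : ℤ) := fun i => rfl
  have crossL : ∀ a : Fin m, δ (Fin.castAdd n a.rev) = -(lam a : ℤ) := by
    intro a; rw [evalL, Fin.rev_rev]
  have crossLval : ∀ a : Fin m,
      ((Fin.castAdd n a.rev : Fin (m+n)) : ℤ) = (m : ℤ) - 1 - a.val := by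
    intro a
    rw [finz]
    have h1 : (Fin.castAdd n a.rev).val = m - (a.val + 1) := revval a
    have h2 : a.val < m := a.isLt
    omega
  have crossRval : ∀ q : Fin n, ((Fin.natAdd m q : Fin (m+n)) : ℤ) = (m : ℤ) + q.val := by
    intro q
    rw [finz]
    have : (Fin.natAdd m q).val = m + q.val := rfl
    omega
  have cross_lt : ∀ (a : Fin m) (q : Fin n),
      (δ (Fin.castAdd n a.rev) - ((Fin.castAdd n a.rev : Fin (m+n)) : ℤ)
        < δ (Fin.natAdd m q) - ((Fin.natAdd m q : Fin (m+n)) : ℤ))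
      ↔ 0 ≤ xfun lam a + xfun mu q := by
    intro a q
    rw [crossL, evalR, crossLval, crossRval]
    simp only [xfun]
    omega
  have H : ∀ (a : Fin m) (q : Fin n), xfun lam a + xfun mu q ≠ -1 := by
    intro a q hc
    have heq : δ (Fin.castAdd n a.rev) - ((Fin.castAdd n a.rev : Fin (m+n)) : ℤ)
        = δ (Fin.natAdd m q) - ((Fin.natAdd m q : Fin (m+n)) : ℤ) := by
      rw [crossL, evalR, crossLval, crossRval]
      simp only [xfun] at hc
      omega
    have := hsort heq
    have hv := congrArg Fin.val this
    have h1 : (Fin.castAdd n a.rev).val = m - (a.val + 1) := revval a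
    have h2 : (Fin.natAdd m q).val = m + q.val := rfl
    have := a.isLt
    omega
  set S₂ : Finset (Fin m × Fin n) :=
    univ.filter (fun p => 0 ≤ xfun lam p.1 + xfun mu p.2) with hS₂
  have hcard : exchNum δ = S₂.card := by
    rw [exchNum]
    symm
    apply Finset.card_nbij
      (i := fun p : Fin m × Fin n => (Fin.castAdd n p.1.rev, Fin.natAdd m p.2))
    · intro p hp
      simp only [hS₂, mem_coe, mem_filter, mem_univ, true_and] at hp ⊢
      constructor
      · show (Fin.castAdd n p.1.rev) < (Fin.natAdd m p.2)
        rw [Fin.lt_def]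
        have h1 : (Fin.castAdd n p.1.rev).val = m - (p.1.val + 1) := revval p.1
        have h2 : (Fin.natAdd m p.2).val = m + p.2.val := rfl
        have := p.1.isLt
        omega
      · exact (cross_lt p.1 p.2).mpr hp
    · intro p _ p' _ heq
      have hfst := congrArg Prod.fst heq
      have hsnd := congrArg Prod.snd heq
      have h1 := congrArg Fin.val hfst
      have h2 := congrArg Fin.val hsnd
      simp only [] at h1 h2
      have e1 : (Fin.castAdd n p.1.rev).val = m - (p.1.val + 1) := revval p.1
      have e1' : (Fin.castAdd n p'.1.rev).val = m - (p'.1.val + 1) := revval p'.1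
      have e2 : (Fin.natAdd m p.2).val = m + p.2.val := rfl
      have e2' : (Fin.natAdd m p'.2).val = m + p'.2.val := rfl
      have i1 := p.1.isLt
      have i1' := p'.1.isLt
      have hp1 : p.1 = p'.1 := by apply Fin.ext; omega
      have hp2 : p.2 = p'.2 := by apply Fin.ext; omega
      exact Prod.ext hp1 hp2
    · rintro ⟨i, j⟩ hij
      simp only [mem_coe, mem_filter, mem_univ, true_and] at hij
      obtain ⟨hlt, hs⟩ := hij
      have hvlt : i.val < j.val := hlt
      rw [finz i, finz j] at hs
      have hi : i.val < m := by
        by_contra hge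
        push_neg at hge
        have hgej : m ≤ j.val := by omega
        have ei : i = Fin.natAdd m ⟨i.val - m, by omega⟩ := by
          apply Fin.ext; show i.val = m + (i.val - m); omega
        have ej : j = Fin.natAdd m ⟨j.val - m, by omega⟩ := by
          apply Fin.ext; show j.val = m + (j.val - m); omega
        have hdi : δ i = (mu ⟨i.val - m, by omega⟩ : ℤ) := by
          conv_lhs => rw [ei]
          exact evalR _
        have hdj : δ j = (mu ⟨j.val - m, by omega⟩ : ℤ) := by
          conv_lhs => rw [ej]
          exact evalR _
        have hle : mu ⟨j.val - m, by omega⟩ ≤ mu ⟨i.val - m, by omega⟩ := by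
          apply hmu
          show i.val - m ≤ j.val - m
          omega
        have hle' : ((mu ⟨j.val - m, by omega⟩ : ℕ) : ℤ)
            ≤ ((mu ⟨i.val - m, by omega⟩ : ℕ) : ℤ) := by exact_mod_cast hle
        omega
      have hj : m ≤ j.val := by
        by_contra hjm
        push_neg at hjm
        have ei : i = Fin.castAdd n ⟨i.val, hi⟩ := by apply Fin.ext; rfl
        have ej : j = Fin.castAdd n ⟨j.val, hjm⟩ := by apply Fin.ext; rfl
        have hdi : δ i = -(lam (Fin.rev ⟨i.val, hi⟩) : ℤ) := by
          conv_lhs => rw [ei]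
          exact evalL _
        have hdj : δ j = -(lam (Fin.rev ⟨j.val, hjm⟩) : ℤ) := by
          conv_lhs => rw [ej]
          exact evalL _
        have hrev : (Fin.rev (⟨j.val, hjm⟩ : Fin m)) ≤ Fin.rev (⟨i.val, hi⟩ : Fin m) := by
          show (Fin.rev (⟨j.val, hjm⟩ : Fin m)).val ≤ (Fin.rev (⟨i.val, hi⟩ : Fin m)).val
          have r1 : (Fin.rev (⟨i.val, hi⟩ : Fin m)).val = m - ((⟨i.val, hi⟩ : Fin m).val + 1) := revval _
          have r2 : (Fin.rev (⟨j.val, hjm⟩ : Fin m)).val = m - ((⟨j.val, hjm⟩ : Fin m).val + 1) := revval _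
          have t1 : (⟨i.val, hi⟩ : Fin m).val = i.val := rfl
          have t2 : (⟨j.val, hjm⟩ : Fin m).val = j.val := rfl
          omega
        have hle := hlam hrev
        have hle' : ((lam (Fin.rev (⟨i.val, hi⟩ : Fin m)) : ℕ) : ℤ)
            ≤ ((lam (Fin.rev (⟨j.val, hjm⟩ : Fin m)) : ℕ) : ℤ) := by exact_mod_cast hle
        have t1 : (⟨i.val, hi⟩ : Fin m).val = i.val := rfl
        have t2 : (⟨j.val, hjm⟩ : Fin m).val = j.val := rfl
        have t3 : (Fin.castAdd n (⟨i.val, hi⟩ : Fin m)).val = i.val := rfl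
        have t4 : (Fin.castAdd n (⟨j.val, hjm⟩ : Fin m)).val = j.val := rfl
        omega
      have e1 : Fin.castAdd n (Fin.rev ⟨i.val, hi⟩).rev = i := by
        apply Fin.ext
        show ((Fin.rev ⟨i.val, hi⟩).rev).val = i.val
        rw [Fin.rev_rev]
      have e2 : Fin.natAdd m (⟨j.val - m, by omega⟩ : Fin n) = j := by
        apply Fin.ext
        show m + (j.val - m) = j.val
        omega
      refine ⟨(Fin.rev ⟨i.val, hi⟩, ⟨j.val - m, by omega⟩), ?_, ?_⟩
      · simp only [hS₂, mem_coe, mem_filter, mem_univ, true_and]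
        have ei : i = Fin.castAdd n ⟨i.val, hi⟩ := by apply Fin.ext; rfl
        have hdi : δ i = -(lam (Fin.rev ⟨i.val, hi⟩) : ℤ) := by
          conv_lhs => rw [ei]
          exact evalL _
        have ej : j = Fin.natAdd m ⟨j.val - m, by omega⟩ := by
          apply Fin.ext; show j.val = m + (j.val - m); omega
        have hdj : δ j = (mu ⟨j.val - m, by omega⟩ : ℤ) := by
          conv_lhs => rw [ej]
          exact evalR _
        have hrv : (Fin.rev (⟨i.val, hi⟩ : Fin m)).val = m - (i.val + 1) := revval _
        have t1 : (⟨i.val, hi⟩ : Fin m).val = i.val := rfl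
        have t2 : ((⟨j.val - m, by omega⟩ : Fin n)).val = j.val - m := rfl
        simp only [xfun]
        omega
      · show (Fin.castAdd n (Fin.rev ⟨i.val, hi⟩).rev,
            Fin.natAdd m (⟨j.val - m, by omega⟩ : Fin n)) = (i, j)
        rw [e1, e2]
  rw [hcard]
  set T : Finset (Fin n) := univ.filter (fun q => xfun mu q < 0) with hT
  set Tl : Finset (Fin m) := univ.filter (fun a => xfun lam a < 0) with hTl
  set B : Finset (Fin m × Fin n) := S₂.filter (fun p => xfun mu p.2 < 0) with hB
  set R : Finset (Fin m × Fin n) := S₂.filter (fun p => ¬(xfun mu p.2 < 0)) with hR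
  set C : Finset (Fin m × Fin n) := R.filter (fun p => xfun lam p.1 < 0) with hC
  set A : Finset (Fin m × Fin n) := R.filter (fun p => ¬(xfun lam p.1 < 0)) with hA
  have hsplit1 : B.card + R.card = S₂.card :=
    Finset.card_filter_add_card_filter_not (s := S₂) (p := fun p => xfun mu p.2 < 0)
  have hsplit2 : C.card + A.card = R.card :=
    Finset.card_filter_add_card_filter_not (s := R) (p := fun p => xfun lam p.1 < 0)
  -- bound A
  have hAbound : A.card ≤ durfee lam * durfee mu := by
    have hsub : A ⊆ (univ.filter (fun i : Fin m => (i : ℕ) + 1 ≤ lam i))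
        ×ˢ (univ.filter (fun i : Fin n => (i : ℕ) + 1 ≤ mu i)) := by
      intro p hp
      simp only [hA, hR, hS₂, mem_filter, mem_univ, true_and, not_lt] at hp
      obtain ⟨⟨_, hy⟩, hx⟩ := hp
      rw [Finset.mem_product]
      simp only [mem_filter, mem_univ, true_and]
      simp only [xfun] at hx hy
      omega
    have := Finset.card_le_card hsub
    rwa [Finset.card_product] at this
  -- bound B
  have hBbound : B.card ≤ plusSum lam := by
    have hfib : B.card = ∑ q ∈ T, (B.filter (fun p => p.2 = q)).card := by
      apply Finset.card_eq_sum_card_fiberwise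
      intro p hp
      simp only [hB, hS₂, mem_coe, mem_filter, mem_univ, true_and] at hp
      simp only [hT, mem_coe, mem_filter, mem_univ, true_and]
      exact hp.2
    rw [hfib]
    refine le_trans ?_ (crossB hlam hmu H)
    rw [← hT]
    apply Finset.sum_le_sum
    intro q hq
    apply Finset.card_le_card_of_injOn Prod.fst
    · intro p hp
      simp only [hB, hS₂, mem_coe, mem_filter, mem_univ, true_and] at hp
      obtain ⟨⟨hxy, _⟩, hpq⟩ := hp
      simp only [mem_coe, mem_filter, mem_univ, true_and]
      rw [← hpq]
      exact hxy
    · intro p1 h1 p2 h2 heq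
      simp only [hB, mem_coe, mem_filter] at h1 h2
      exact Prod.ext heq (h1.2.trans h2.2.symm)
  -- bound C
  have hCbound : C.card ≤ plusSum mu := by
    have H' : ∀ (q : Fin n) (a : Fin m), xfun mu q + xfun lam a ≠ -1 := by
      intro q a hc; exact H a q (by omega)
    have hfib : C.card = ∑ a ∈ Tl, (C.filter (fun p => p.1 = a)).card := by
      apply Finset.card_eq_sum_card_fiberwise
      intro p hp
      simp only [hC, hR, hS₂, mem_coe, mem_filter, mem_univ, true_and] at hp
      simp only [hTl, mem_coe, mem_filter, mem_univ, true_and]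
      exact hp.2
    rw [hfib]
    refine le_trans ?_ (crossB hmu hlam H')
    rw [← hTl]
    apply Finset.sum_le_sum
    intro a ha
    apply Finset.card_le_card_of_injOn Prod.snd
    · intro p hp
      simp only [hC, hR, hS₂, mem_coe, mem_filter, mem_univ, true_and] at hp
      obtain ⟨⟨⟨hxy, _⟩, _⟩, hpa⟩ := hp
      simp only [mem_coe, mem_filter, mem_univ, true_and]
      rw [← hpa]
      omega
    · intro p1 h1 p2 h2 heq
      simp only [hC, mem_coe, mem_filter] at h1 h2
      exact Prod.ext (h1.2.trans h2.2.symm) heq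
  omega
end

section
/- If ν is a partition occurring in the Littlewood–Richardson product of partitions λ and μ, then for every k ∈ ℕ one has ν₁+⋯+ν_k ≤ λ₁+⋯+λ_k + μ₁+⋯+μ_k. -/
/-!  STATEMENT 3 (Horn inequality, Lemma 3.3).  If ν occurs in the
Littlewood–Richardson product of λ and μ (i.e. `c^ν_{λμ} ≠ 0` in
`s_λ·s_μ = Σ c^ν_{λμ} s_ν`), then `ν₁+⋯+ν_k ≤ λ₁+⋯+λ_k + μ₁+⋯+μ_k` for all k.

Schur polynomials in `n` variables are encoded through the bialternant formula:
`s_κ = a_{κ+ρ} / a_ρ` where `a_τ = det(xᵢ^{τ_j})` and `ρ = (n-1,…,1,0)`.  The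
expansion `s_λ s_μ = Σ_κ c_κ s_κ` (over partitions `κ` with at most `n` parts)
is therefore equivalent to the polynomial identity
`a_{λ+ρ}·a_{μ+ρ} = a_ρ · Σ_κ c_κ a_{κ+ρ}`, and the expansion coefficients are
uniquely determined (the alternants are linearly independent), so `c ν ≠ 0`
is exactly the occurrence of ν in the Littlewood–Richardson product. -/

open MvPolynomial in
/-- The alternant `a_{κ+ρ} = det(xᵢ^{κ_j + n - 1 - j})` (0-indexed `j`). -/
noncomputable def altPoly {n : ℕ} (κ : Fin n → ℕ) : MvPolynomial (Fin n) ℤ :=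
  Matrix.det (Matrix.of fun i j : Fin n =>
    (X i : MvPolynomial (Fin n) ℤ) ^ (κ j + (n - 1 - (j : ℕ))))

namespace Stmt3Aux

open Polynomial Finset

/-- `e κ j = κ j + (n-1-j)`, the exponents appearing in `altPoly κ`. -/
def eFun {n : ℕ} (κ : Fin n → ℕ) (j : Fin n) : ℕ := κ j + (n - 1 - (j : ℕ))

/-- `D w κ σ` is the `w`-weighted degree of the `σ`-term of `altPoly κ`. -/
def DFun {n : ℕ} (w κ : Fin n → ℕ) (σ : Equiv.Perm (Fin n)) : ℕ :=
  ∑ j, w (σ j) * eFun κ j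

lemma DFun_one {n : ℕ} (w κ : Fin n → ℕ) : DFun w κ 1 = ∑ j, w j * eFun κ j := by
  simp [DFun]

lemma strictAnti_eFun {n : ℕ} {κ : Fin n → ℕ} (hκ : Antitone κ) : StrictAnti (eFun κ) := by
  intro i j hij
  have h1 : κ j ≤ κ i := hκ hij.le
  have h2 : (i : ℕ) < (j : ℕ) := hij
  have h3 : (j : ℕ) < n := j.isLt
  simp only [eFun]
  omega

lemma monovary_w {n : ℕ} {w κ : Fin n → ℕ} (hw : Antitone w) (hκ : Antitone κ) :
    Monovary w (eFun κ) := by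
  intro i j h
  rcases le_or_gt j i with hji | hij
  · exact hw hji
  · have := (strictAnti_eFun hκ).antitone hij.le
    omega

lemma phi_alt {n : ℕ} (w : Fin n → ℕ) (κ : Fin n → ℕ) :
    MvPolynomial.eval₂Hom (Int.castRingHom (Polynomial ℤ))
      (fun i => (Polynomial.X : Polynomial ℤ) ^ w i) (altPoly κ) =
    ∑ σ : Equiv.Perm (Fin n), ((Equiv.Perm.sign σ : ℤ) : Polynomial ℤ) *
      Polynomial.X ^ DFun w κ σ := by
  rw [altPoly, RingHom.map_det, Matrix.det_apply']
  refine Finset.sum_congr rfl fun σ _ => ?_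
  congr 1
  rw [DFun, ← Finset.prod_pow_eq_pow_sum]
  refine Finset.prod_congr rfl fun j _ => ?_
  simp [pow_mul, eFun]

lemma natDegree_phi_le {n : ℕ} (w κ : Fin n → ℕ) (hw : Antitone w) (hκ : Antitone κ) :
    (MvPolynomial.eval₂Hom (Int.castRingHom (Polynomial ℤ))
      (fun i => (Polynomial.X : Polynomial ℤ) ^ w i) (altPoly κ)).natDegree ≤ DFun w κ 1 := by
  rw [phi_alt]
  apply Polynomial.natDegree_sum_le_of_forall_le
  intro σ _
  refine le_trans Polynomial.natDegree_mul_le ?_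
  have h1 : ((Equiv.Perm.sign σ : ℤ) : Polynomial ℤ).natDegree = 0 := natDegree_intCast _
  have h2 : ((Polynomial.X : Polynomial ℤ) ^ DFun w κ σ).natDegree = DFun w κ σ :=
    Polynomial.natDegree_X_pow _
  rw [h1, h2, zero_add]
  have h3 := (monovary_w hw hκ).sum_comp_perm_smul_le_sum_smul (σ := σ)
  simpa [smul_eq_mul, DFun, DFun_one] using h3

/-- the key injectivity: if the `σ`-term of `altPoly κ₁` has the same `w`-degree as
the identity term of `altPoly κ₂`, then `κ₁ = κ₂` and `σ = 1`. -/
lemma DFun_inj {n : ℕ} (w : Fin n → ℕ) (Bd : ℕ)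
    (hwinj : ∀ α β : Fin n → ℕ, (∀ i, α i < Bd) → (∀ i, β i < Bd) →
      ∑ i, w i * α i = ∑ i, w i * β i → α = β)
    (κ₁ κ₂ : Fin n → ℕ) (hb1 : ∀ j, eFun κ₁ j < Bd) (hb2 : ∀ j, eFun κ₂ j < Bd)
    (ha1 : Antitone κ₁) (ha2 : Antitone κ₂) (σ : Equiv.Perm (Fin n))
    (h : DFun w κ₁ σ = DFun w κ₂ 1) : κ₁ = κ₂ ∧ σ = 1 := by
  have hre : DFun w κ₁ σ = ∑ i, w i * eFun κ₁ (σ.symm i) := by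
    rw [DFun, ← Equiv.sum_comp σ.symm (fun j => w (σ j) * eFun κ₁ j)]
    simp
  have heq : (fun i => eFun κ₁ (σ.symm i)) = eFun κ₂ := by
    refine hwinj _ _ (fun i => hb1 _) hb2 ?_
    rw [← hre, h, DFun_one]
  have hr : Set.range (eFun κ₁) = Set.range (eFun κ₂) := by
    rw [← heq]
    exact (σ.symm.surjective.range_comp (eFun κ₁)).symm
  have he12 : eFun κ₁ = eFun κ₂ :=
    ((strictAnti_eFun ha1).range_inj (strictAnti_eFun ha2)).1 hr
  have hκ : κ₁ = κ₂ := by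
    funext j
    have := congrFun he12 j
    simp only [eFun] at this
    omega
  refine ⟨hκ, ?_⟩
  have hid : ∀ i, σ.symm i = i := by
    intro i
    have h5 := congrFun heq i
    refine (strictAnti_eFun ha1).injective ?_
    rw [h5, he12]
  ext i
  have h6 : σ i = i := by
    have h7 := hid (σ i)
    rw [Equiv.symm_apply_apply] at h7
    exact h7.symm
  simp [h6]

lemma coeff_phi {n : ℕ} (w : Fin n → ℕ) (Bd : ℕ)
    (hwinj : ∀ α β : Fin n → ℕ, (∀ i, α i < Bd) → (∀ i, β i < Bd) →
      ∑ i, w i * α i = ∑ i, w i * β i → α = β)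
    (κ₁ κ₂ : Fin n → ℕ) (hb1 : ∀ j, eFun κ₁ j < Bd) (hb2 : ∀ j, eFun κ₂ j < Bd)
    (ha1 : Antitone κ₁) (ha2 : Antitone κ₂) :
    (MvPolynomial.eval₂Hom (Int.castRingHom (Polynomial ℤ))
      (fun i => (Polynomial.X : Polynomial ℤ) ^ w i) (altPoly κ₁)).coeff (DFun w κ₂ 1)
      = if κ₁ = κ₂ then 1 else 0 := by
  rw [phi_alt, Polynomial.finset_sum_coeff]
  have hterm : ∀ σ : Equiv.Perm (Fin n),
      (((Equiv.Perm.sign σ : ℤ) : Polynomial ℤ) * Polynomial.X ^ DFun w κ₁ σ).coeff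
          (DFun w κ₂ 1)
        = (Equiv.Perm.sign σ : ℤ) * (if DFun w κ₂ 1 = DFun w κ₁ σ then 1 else 0) := by
    intro σ
    rw [← Polynomial.C_eq_intCast, Polynomial.coeff_C_mul, Polynomial.coeff_X_pow]
    norm_cast
  rw [Finset.sum_congr rfl fun σ _ => hterm σ]
  by_cases hk : κ₁ = κ₂
  · subst hk
    rw [if_pos rfl, Finset.sum_eq_single (1 : Equiv.Perm (Fin n))]
    · simp
    · intro σ _ hσ
      rw [if_neg, mul_zero]
      intro hD
      exact hσ (DFun_inj w Bd hwinj κ₁ κ₁ hb1 hb1 ha1 ha1 σ hD.symm).2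
    · intro h
      exact absurd (Finset.mem_univ _) h
  · rw [if_neg hk]
    apply Finset.sum_eq_zero
    intro σ _
    rw [if_neg, mul_zero]
    intro hD
    exact hk (DFun_inj w Bd hwinj κ₁ κ₂ hb1 hb2 ha1 ha2 σ hD.symm).1

lemma tail_sum {B m : ℕ} (f : Fin (m + 1) → ℕ) :
    ∑ i : Fin m, B ^ ((i.succ : Fin (m + 1)) : ℕ) * f i.succ
      = B * ∑ i : Fin m, B ^ (i : ℕ) * f i.succ := by
  rw [Finset.mul_sum]
  refine Finset.sum_congr rfl fun i _ => ?_
  rw [Fin.val_succ, pow_succ]; ring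

lemma digit_sum_lt {B : ℕ} (hB : 0 < B) : ∀ {m : ℕ} (a : Fin m → ℕ),
    (∀ i, a i < B) → ∑ i : Fin m, B ^ (i : ℕ) * a i < B ^ m := by
  intro m
  induction m with
  | zero => intro a _; simp
  | succ m ih =>
    intro a ha
    rw [Fin.sum_univ_succ, tail_sum a]
    have h1 : ∑ i : Fin m, B ^ (i : ℕ) * a i.succ < B ^ m := ih _ fun i => ha _
    have h0 := ha 0
    calc B ^ (((0 : Fin (m + 1))) : ℕ) * a 0 + B * ∑ i : Fin m, B ^ (i : ℕ) * a i.succ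
        < B + B * ∑ i : Fin m, B ^ (i : ℕ) * a i.succ := by simpa using h0
      _ = B * ((∑ i : Fin m, B ^ (i : ℕ) * a i.succ) + 1) := by ring
      _ ≤ B * B ^ m := Nat.mul_le_mul_left _ (by omega)
      _ = B ^ (m + 1) := by rw [pow_succ]; ring

lemma digit_sum_inj {B : ℕ} (hB : 0 < B) : ∀ {m : ℕ} (a b : Fin m → ℕ),
    (∀ i, a i < B) → (∀ i, b i < B) →
    ∑ i : Fin m, B ^ (i : ℕ) * a i = ∑ i : Fin m, B ^ (i : ℕ) * b i → a = b := by
  intro m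
  induction m with
  | zero => intro a b _ _ _; funext i; exact i.elim0
  | succ m ih =>
    intro a b ha hb h
    rw [Fin.sum_univ_succ, Fin.sum_univ_succ, tail_sum a, tail_sum b] at h
    simp only [Fin.val_zero, pow_zero, one_mul] at h
    have h0 : a 0 = b 0 := by
      have h2 := congrArg (· % B) h
      simpa [Nat.add_mul_mod_self_left, Nat.mod_eq_of_lt (ha 0), Nat.mod_eq_of_lt (hb 0)] using h2
    have ht : (fun i : Fin m => a i.succ) = (fun i : Fin m => b i.succ) := by
      refine ih _ _ (fun i => ha _) (fun i => hb _) ?_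
      have h3 : B * ∑ i : Fin m, B ^ (i : ℕ) * a i.succ
          = B * ∑ i : Fin m, B ^ (i : ℕ) * b i.succ := by omega
      exact Nat.eq_of_mul_eq_mul_left hB h3
    funext i
    refine Fin.cases h0 (fun j => congrFun ht j) i

end Stmt3Aux

open Finset Polynomial Stmt3Aux

theorem stmt_3 {n : ℕ} (lam mu nu : Fin n → ℕ)
    (hlam : Antitone lam) (hmu : Antitone mu) (hnu : Antitone nu)
    (S : Finset (Fin n → ℕ)) (hS : ∀ κ ∈ S, Antitone κ)
    (c : (Fin n → ℕ) → ℤ)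
    (hexp : altPoly lam * altPoly mu =
      altPoly (fun _ => 0) * ∑ κ ∈ S, c κ • altPoly κ)
    (hnuS : nu ∈ S) (hcnu : c nu ≠ 0) (k : ℕ) :
    ∑ i ∈ Finset.univ.filter (fun i : Fin n => (i : ℕ) < k), nu i ≤
      (∑ i ∈ Finset.univ.filter (fun i : Fin n => (i : ℕ) < k), lam i) +
        ∑ i ∈ Finset.univ.filter (fun i : Fin n => (i : ℕ) < k), mu i := by
  classical
  obtain ⟨T, hT⟩ : ∃ T : ℕ, ∀ κ ∈ S, (∑ j, κ j) ≤ T :=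
    ⟨∑ κ ∈ S, ∑ j, κ j, fun κ hκ =>
      Finset.single_le_sum (f := fun κ' => ∑ j', κ' j') (fun _ _ => Nat.zero_le _) hκ⟩
  set E : ℕ := 2 * n + (∑ j, lam j) + (∑ j, mu j) + T with hEdef
  set B : ℕ := E + 1 with hBdef
  set C : ℕ := B ^ n with hCdef
  have hB : 0 < B := by omega
  have hC : 0 < C := by rw [hCdef]; exact pow_pos hB n
  set w : Fin n → ℕ := fun i => C * (if (i : ℕ) < k then 1 else 0) + B ^ (n - 1 - (i : ℕ))
    with hwdef
  have hS_bound : ∀ κ ∈ S, ∀ j, eFun κ j < B := by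
    intro κ hκ j
    have h1 : κ j ≤ ∑ j', κ j' :=
      Finset.single_le_sum (fun _ _ => Nat.zero_le _) (Finset.mem_univ j)
    have h2 : (∑ j', κ j') ≤ T := hT κ hκ
    have h3 : (j : ℕ) < n := j.isLt
    simp only [eFun]
    omega
  have h0_bound : ∀ j : Fin n, eFun (fun _ => (0 : ℕ)) j < B := by
    intro j
    have h3 : (j : ℕ) < n := j.isLt
    simp only [eFun]
    omega
  have hwanti : Antitone w := by
    intro i j hij
    have h2 : (i : ℕ) ≤ (j : ℕ) := hij
    have hpow : B ^ (n - 1 - (j : ℕ)) ≤ B ^ (n - 1 - (i : ℕ)) :=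
      Nat.pow_le_pow_right hB (by omega)
    simp only [hwdef]
    by_cases hj : (j : ℕ) < k <;> by_cases hi : (i : ℕ) < k <;> simp [hi, hj] <;> omega
  have hrev : ∀ γ : Fin n → ℕ, ∑ i : Fin n, B ^ (n - 1 - (i : ℕ)) * γ i
      = ∑ i : Fin n, B ^ (i : ℕ) * γ i.rev := by
    intro γ
    rw [← Equiv.sum_comp Fin.revPerm (fun i : Fin n => B ^ (i : ℕ) * γ i.rev)]
    refine Finset.sum_congr rfl fun i _ => ?_
    simp only [Fin.revPerm_apply, Fin.rev_rev]
    congr 2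
    have h3 : (i : ℕ) < n := i.isLt
    rw [Fin.val_rev]
    omega
  have hg_lt : ∀ γ : Fin n → ℕ, (∀ i, γ i < B) →
      ∑ i : Fin n, B ^ (n - 1 - (i : ℕ)) * γ i < C := by
    intro γ hγ
    rw [hrev γ, hCdef]
    exact digit_sum_lt hB _ fun i => hγ _
  have hsum_w : ∀ α : Fin n → ℕ, ∑ i : Fin n, w i * α i
      = C * (∑ i ∈ Finset.univ.filter (fun i : Fin n => (i : ℕ) < k), α i)
        + ∑ i : Fin n, B ^ (n - 1 - (i : ℕ)) * α i := by
    intro α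
    have h1 : ∀ i : Fin n, w i * α i
        = C * (if (i : ℕ) < k then α i else 0) + B ^ (n - 1 - (i : ℕ)) * α i := by
      intro i
      by_cases h : (i : ℕ) < k <;> simp [hwdef, h] <;> ring
    rw [Finset.sum_congr rfl fun i _ => h1 i, Finset.sum_add_distrib, ← Finset.mul_sum,
      ← Finset.sum_filter]
  have hwinj : ∀ α β : Fin n → ℕ, (∀ i, α i < B) → (∀ i, β i < B) →
      ∑ i : Fin n, w i * α i = ∑ i : Fin n, w i * β i → α = β := by
    intro α β hα hβ h
    rw [hsum_w α, hsum_w β] at h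
    have hgα := hg_lt α hα
    have hgβ := hg_lt β hβ
    have hg : ∑ i : Fin n, B ^ (n - 1 - (i : ℕ)) * α i
        = ∑ i : Fin n, B ^ (n - 1 - (i : ℕ)) * β i := by
      have h2 := congrArg (· % C) h
      simp only [Nat.mul_add_mod] at h2
      rwa [Nat.mod_eq_of_lt hgα, Nat.mod_eq_of_lt hgβ] at h2
    have h3 : (fun i : Fin n => α i.rev) = (fun i : Fin n => β i.rev) := by
      refine digit_sum_inj hB _ _ (fun i => hα _) (fun i => hβ _) ?_
      rw [← hrev α, ← hrev β]
      exact hg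
    funext i
    have h4 := congrFun h3 i.rev
    simpa [Fin.rev_rev] using h4
  have himg := congrArg (MvPolynomial.eval₂Hom (Int.castRingHom (Polynomial ℤ))
      (fun i => (Polynomial.X : Polynomial ℤ) ^ w i)) hexp
  rw [map_mul, map_mul, map_sum] at himg
  have hPcoeff : (∑ κ ∈ S, (MvPolynomial.eval₂Hom (Int.castRingHom (Polynomial ℤ))
        (fun i => (Polynomial.X : Polynomial ℤ) ^ w i)) (c κ • altPoly κ)).coeff
        (DFun w nu 1) = c nu := by
    rw [Polynomial.finset_sum_coeff]
    have hterm : ∀ κ ∈ S, ((MvPolynomial.eval₂Hom (Int.castRingHom (Polynomial ℤ))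
          (fun i => (Polynomial.X : Polynomial ℤ) ^ w i)) (c κ • altPoly κ)).coeff
          (DFun w nu 1) = c κ * (if κ = nu then 1 else 0) := by
      intro κ hκ
      rw [map_zsmul, Polynomial.coeff_smul,
        coeff_phi w B hwinj κ nu (hS_bound κ hκ) (hS_bound nu hnuS) (hS κ hκ) hnu]
      simp [smul_eq_mul]
    rw [Finset.sum_congr rfl hterm, Finset.sum_eq_single nu]
    · simp
    · intro κ hκ hne
      simp [hne]
    · intro h
      exact absurd hnuS h
  have hPne : (∑ κ ∈ S, (MvPolynomial.eval₂Hom (Int.castRingHom (Polynomial ℤ))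
      (fun i => (Polynomial.X : Polynomial ℤ) ^ w i)) (c κ • altPoly κ)) ≠ 0 := by
    intro h
    rw [h] at hPcoeff
    simp at hPcoeff
    exact hcnu hPcoeff.symm
  have hρcoeff : ((MvPolynomial.eval₂Hom (Int.castRingHom (Polynomial ℤ))
      (fun i => (Polynomial.X : Polynomial ℤ) ^ w i)) (altPoly (fun _ => (0 : ℕ)))).coeff
      (DFun w (fun _ => 0) 1) = 1 := by
    have h := coeff_phi w B hwinj (fun _ => 0) (fun _ => 0) h0_bound h0_bound
      antitone_const antitone_const
    simpa using h
  have hρne : (MvPolynomial.eval₂Hom (Int.castRingHom (Polynomial ℤ))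
      (fun i => (Polynomial.X : Polynomial ℤ) ^ w i)) (altPoly (fun _ => (0 : ℕ))) ≠ 0 := by
    intro h
    rw [h] at hρcoeff
    simp at hρcoeff
  have hρge : DFun w (fun _ => 0) 1 ≤ ((MvPolynomial.eval₂Hom (Int.castRingHom (Polynomial ℤ))
      (fun i => (Polynomial.X : Polynomial ℤ) ^ w i)) (altPoly (fun _ => (0 : ℕ)))).natDegree :=
    Polynomial.le_natDegree_of_ne_zero (by rw [hρcoeff]; exact one_ne_zero)
  have hPge : DFun w nu 1 ≤ (∑ κ ∈ S, (MvPolynomial.eval₂Hom (Int.castRingHom (Polynomial ℤ))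
      (fun i => (Polynomial.X : Polynomial ℤ) ^ w i)) (c κ • altPoly κ)).natDegree :=
    Polynomial.le_natDegree_of_ne_zero (by rw [hPcoeff]; exact hcnu)
  have hmain : DFun w (fun _ => 0) 1 + DFun w nu 1 ≤ DFun w lam 1 + DFun w mu 1 := by
    calc DFun w (fun _ => 0) 1 + DFun w nu 1
        ≤ ((MvPolynomial.eval₂Hom (Int.castRingHom (Polynomial ℤ))
            (fun i => (Polynomial.X : Polynomial ℤ) ^ w i)) (altPoly (fun _ => (0:ℕ)))).natDegree
          + (∑ κ ∈ S, (MvPolynomial.eval₂Hom (Int.castRingHom (Polynomial ℤ))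
            (fun i => (Polynomial.X : Polynomial ℤ) ^ w i)) (c κ • altPoly κ)).natDegree :=
        add_le_add hρge hPge
      _ = ((MvPolynomial.eval₂Hom (Int.castRingHom (Polynomial ℤ))
            (fun i => (Polynomial.X : Polynomial ℤ) ^ w i)) (altPoly (fun _ => (0:ℕ)))
          * ∑ κ ∈ S, (MvPolynomial.eval₂Hom (Int.castRingHom (Polynomial ℤ))
            (fun i => (Polynomial.X : Polynomial ℤ) ^ w i)) (c κ • altPoly κ)).natDegree :=
        (Polynomial.natDegree_mul hρne hPne).symm
      _ = ((MvPolynomial.eval₂Hom (Int.castRingHom (Polynomial ℤ))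
            (fun i => (Polynomial.X : Polynomial ℤ) ^ w i)) (altPoly lam)
          * (MvPolynomial.eval₂Hom (Int.castRingHom (Polynomial ℤ))
            (fun i => (Polynomial.X : Polynomial ℤ) ^ w i)) (altPoly mu)).natDegree := by
        rw [← himg]
      _ ≤ ((MvPolynomial.eval₂Hom (Int.castRingHom (Polynomial ℤ))
            (fun i => (Polynomial.X : Polynomial ℤ) ^ w i)) (altPoly lam)).natDegree
          + ((MvPolynomial.eval₂Hom (Int.castRingHom (Polynomial ℤ))
            (fun i => (Polynomial.X : Polynomial ℤ) ^ w i)) (altPoly mu)).natDegree :=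
        Polynomial.natDegree_mul_le
      _ ≤ DFun w lam 1 + DFun w mu 1 :=
        add_le_add (natDegree_phi_le w lam hwanti hlam) (natDegree_phi_le w mu hwanti hmu)
  have hsplit : ∀ κ : Fin n → ℕ,
      DFun w κ 1 = (∑ j, w j * κ j) + DFun w (fun _ => 0) 1 := by
    intro κ
    rw [DFun_one, DFun_one, ← Finset.sum_add_distrib]
    refine Finset.sum_congr rfl fun j _ => ?_
    simp only [eFun]
    ring
  have hkey : ∑ j, w j * nu j ≤ (∑ j, w j * lam j) + ∑ j, w j * mu j := by
    have h1 := hsplit nu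
    have h2 := hsplit lam
    have h3 := hsplit mu
    omega
  rw [hsum_w nu, hsum_w lam, hsum_w mu] at hkey
  have hgsum : ∑ i : Fin n, B ^ (n - 1 - (i : ℕ)) * lam i
      + ∑ i : Fin n, B ^ (n - 1 - (i : ℕ)) * mu i < C := by
    have h1 : ∑ i : Fin n, B ^ (n - 1 - (i : ℕ)) * lam i
        + ∑ i : Fin n, B ^ (n - 1 - (i : ℕ)) * mu i
        = ∑ i : Fin n, B ^ (n - 1 - (i : ℕ)) * (lam i + mu i) := by
      rw [← Finset.sum_add_distrib]
      exact Finset.sum_congr rfl fun i _ => by ring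
    rw [h1]
    refine hg_lt _ fun i => ?_
    have ha : lam i ≤ ∑ j, lam j :=
      Finset.single_le_sum (fun _ _ => Nat.zero_le _) (Finset.mem_univ i)
    have hb : mu i ≤ ∑ j, mu j :=
      Finset.single_le_sum (fun _ _ => Nat.zero_le _) (Finset.mem_univ i)
    omega
  have hfinal : C * (∑ i ∈ Finset.univ.filter (fun i : Fin n => (i : ℕ) < k), nu i)
      < C * ((∑ i ∈ Finset.univ.filter (fun i : Fin n => (i : ℕ) < k), lam i)
        + (∑ i ∈ Finset.univ.filter (fun i : Fin n => (i : ℕ) < k), mu i) + 1) := by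
    have h2 : C * ((∑ i ∈ Finset.univ.filter (fun i : Fin n => (i : ℕ) < k), lam i)
        + (∑ i ∈ Finset.univ.filter (fun i : Fin n => (i : ℕ) < k), mu i) + 1)
        = C * (∑ i ∈ Finset.univ.filter (fun i : Fin n => (i : ℕ) < k), lam i)
          + C * (∑ i ∈ Finset.univ.filter (fun i : Fin n => (i : ℕ) < k), mu i) + C := by
      ring
    omega
  have h9 := Nat.lt_of_mul_lt_mul_left hfinal
  omega
end

section
/- Let Q be a quiver and for each vertex x let u_{μ(x)}, u_{ν(x)} be nonnegative integers and for each arrow a a nonnegative integer u_{λ(a)} satisfying: (i) u_{λ(a)} ≤ u_{μ(ta)} and u_{λ(a)} ≤ u_{ν(ha)} for each arrow a, (ii) Σ_{a: ta=x} u_{λ(a)} ≥ u_{μ(x)} and Σ_{b: hb=x} u_{λ(b)} ≥ u_{ν(x)} whenever these sums are over a nonempty index set, with u_{μ(x)} = 0 when x is a sink and u_{ν(x)} = 0 when x is a source. Then Σ_{x} (u_{μ(x)}² + u_{ν(x)}² − u_{μ(x)}u_{ν(x)}) − Σ_{a} u_{μ(ta)}u_{ν(ha)} ≥ E_Q(u),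 where u_x := max(u_{μ(x)}, u_{ν(x)}) and E_Q is the Euler form of Q. -/
/-!  STATEMENT 7 (key inequality in the proof of Theorem 3.5).  Given Durfee
sizes `u_{μ(x)}, u_{ν(x)}` at the vertices and `u_{λ(a)}` at the arrows of a
quiver, subject to the stated compatibilities, one has
`Σ_x (u_{μ(x)}² + u_{ν(x)}² − u_{μ(x)}u_{ν(x)}) − Σ_a u_{μ(ta)}u_{ν(ha)}
   ≥ E_Q(u)`, with `u_x = max(u_{μ(x)}, u_{ν(x)})` and `E_Q` the Euler form. -/

theorem stmt_7 {Q0 Q1 : Type*} [Fintype Q0] [Fintype Q1] [DecidableEq Q0]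
    (t h : Q1 → Q0) (um un : Q0 → ℕ) (ul : Q1 → ℕ)
    (h1 : ∀ a, ul a ≤ um (t a) ∧ ul a ≤ un (h a))
    (h2 : ∀ x, (∃ a, t a = x) →
      um x ≤ ∑ a ∈ Finset.univ.filter (fun a => t a = x), ul a)
    (h3 : ∀ x, (∃ b, h b = x) →
      un x ≤ ∑ b ∈ Finset.univ.filter (fun b => h b = x), ul b)
    (h4 : ∀ x, (¬ ∃ a, t a = x) → um x = 0)
    (h5 : ∀ x, (¬ ∃ b, h b = x) → un x = 0) :
    (∑ x, ((max (um x) (un x) : ℤ)) ^ 2) -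
        ∑ a, (max (um (t a)) (un (t a)) : ℤ) * (max (um (h a)) (un (h a)) : ℤ) ≤
      (∑ x, ((um x : ℤ) ^ 2 + (un x : ℤ) ^ 2 - (um x : ℤ) * (un x : ℤ))) -
        ∑ a, (um (t a) : ℤ) * (un (h a) : ℤ) := by
  set m : Q0 → ℤ := fun x => (um x : ℤ) with hm
  set n : Q0 → ℤ := fun x => (un x : ℤ) with hn
  set M : Q0 → ℤ := fun x => max (m x) (n x) with hM
  have hMcast : ∀ x, ((max (um x) (un x) : ℕ) : ℤ) = M x := by
    intro x; simp [hM, hm, hn, Nat.cast_max]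
  set S : Q0 → ℤ := fun x => M x - m x with hSdef
  set R : Q0 → ℤ := fun x => M x - n x with hRdef
  have hS0 : ∀ x, 0 ≤ S x := fun x => by
    simp only [hSdef, hM, sub_nonneg]; exact le_max_left _ _
  have hR0 : ∀ x, 0 ≤ R x := fun x => by
    simp only [hRdef, hM, sub_nonneg]; exact le_max_right _ _
  have hm0 : ∀ x, 0 ≤ m x := fun x => Int.natCast_nonneg _
  have hn0 : ∀ x, 0 ≤ n x := fun x => Int.natCast_nonneg _
  -- vertex identity
  have hvert : ∀ x, M x ^ 2 - (m x ^ 2 + n x ^ 2 - m x * n x)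
      = S x * m x + R x * n x := by
    intro x
    rcases le_total (m x) (n x) with hx | hx
    · have : M x = n x := max_eq_right hx
      simp only [hSdef, hRdef, this]; ring
    · have : M x = m x := max_eq_left hx
      simp only [hSdef, hRdef, this]; ring
  -- arrow inequality
  have harr : ∀ a, S (t a) * (ul a : ℤ) + R (h a) * (ul a : ℤ)
      ≤ M (t a) * M (h a) - m (t a) * n (h a) := by
    intro a
    obtain ⟨ha1, ha2⟩ := h1 a
    have ha1' : (ul a : ℤ) ≤ m (t a) := by simp only [hm]; exact_mod_cast ha1
    have ha2' : (ul a : ℤ) ≤ n (h a) := by simp only [hn]; exact_mod_cast ha2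
    have e1 : M (t a) = m (t a) + S (t a) := by simp [hSdef]
    have e2 : M (h a) = n (h a) + R (h a) := by simp [hRdef]
    rw [e1, e2]
    nlinarith [hS0 (t a), hR0 (h a), mul_nonneg (hS0 (t a)) (hR0 (h a))]
  -- fiberwise sums
  have hfibS : ∑ x, S x * m x ≤ ∑ a, S (t a) * (ul a : ℤ) := by
    have := Finset.sum_fiberwise (Finset.univ : Finset Q1) t
      (fun a => S (t a) * (ul a : ℤ))
    rw [← this]
    apply Finset.sum_le_sum
    intro x _
    by_cases hx : ∃ a, t a = x
    · have hsum : ∑ a ∈ Finset.univ.filter (fun a => t a = x), S (t a) * (ul a : ℤ)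
          = S x * ∑ a ∈ Finset.univ.filter (fun a => t a = x), (ul a : ℤ) := by
        rw [Finset.mul_sum]
        apply Finset.sum_congr rfl
        intro a ha
        simp only [Finset.mem_filter] at ha
        rw [ha.2]
      rw [hsum]
      apply mul_le_mul_of_nonneg_left _ (hS0 x)
      have := h2 x hx
      calc m x = ((um x : ℕ) : ℤ) := rfl
        _ ≤ ((∑ a ∈ Finset.univ.filter (fun a => t a = x), ul a : ℕ) : ℤ) := by
            exact_mod_cast this
        _ = _ := by push_cast; ring
    · have : um x = 0 := h4 x hx
      have hmx : m x = 0 := by simp [hm, this]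
      rw [hmx, mul_zero]
      apply Finset.sum_nonneg
      intro a ha
      simp only [Finset.mem_filter] at ha
      exact mul_nonneg (hS0 _) (Int.natCast_nonneg _)
  have hfibR : ∑ x, R x * n x ≤ ∑ a, R (h a) * (ul a : ℤ) := by
    have := Finset.sum_fiberwise (Finset.univ : Finset Q1) h
      (fun a => R (h a) * (ul a : ℤ))
    rw [← this]
    apply Finset.sum_le_sum
    intro x _
    by_cases hx : ∃ b, h b = x
    · have hsum : ∑ a ∈ Finset.univ.filter (fun a => h a = x), R (h a) * (ul a : ℤ)
          = R x * ∑ a ∈ Finset.univ.filter (fun a => h a = x), (ul a : ℤ) := by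
        rw [Finset.mul_sum]
        apply Finset.sum_congr rfl
        intro a ha
        simp only [Finset.mem_filter] at ha
        rw [ha.2]
      rw [hsum]
      apply mul_le_mul_of_nonneg_left _ (hR0 x)
      have := h3 x hx
      calc n x = ((un x : ℕ) : ℤ) := rfl
        _ ≤ ((∑ a ∈ Finset.univ.filter (fun a => h a = x), ul a : ℕ) : ℤ) := by
            exact_mod_cast this
        _ = _ := by push_cast; ring
    · have : un x = 0 := h5 x hx
      have hnx : n x = 0 := by simp [hn, this]
      rw [hnx, mul_zero]
      apply Finset.sum_nonneg
      intro a ha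
      simp only [Finset.mem_filter] at ha
      exact mul_nonneg (hR0 _) (Int.natCast_nonneg _)
  -- assemble
  have key : ∑ x, (M x ^ 2 - (m x ^ 2 + n x ^ 2 - m x * n x))
      ≤ ∑ a, (M (t a) * M (h a) - m (t a) * n (h a)) := by
    calc ∑ x, (M x ^ 2 - (m x ^ 2 + n x ^ 2 - m x * n x))
        = ∑ x, (S x * m x + R x * n x) := Finset.sum_congr rfl (fun x _ => hvert x)
      _ = (∑ x, S x * m x) + ∑ x, R x * n x := Finset.sum_add_distrib
      _ ≤ (∑ a, S (t a) * (ul a : ℤ)) + ∑ a, R (h a) * (ul a : ℤ) :=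
          add_le_add hfibS hfibR
      _ = ∑ a, (S (t a) * (ul a : ℤ) + R (h a) * (ul a : ℤ)) :=
          Finset.sum_add_distrib.symm
      _ ≤ ∑ a, (M (t a) * M (h a) - m (t a) * n (h a)) :=
          Finset.sum_le_sum (fun a _ => harr a)
  simp only [hMcast, Finset.sum_sub_distrib] at key ⊢
  linarith [key]
end

section
/- Let λ = (λ₁,…,λ_m) be a partition, μ = (μ₁,…,μ_n) a partition, and suppose the weight δ = (λ₁,…,λ_m, μ₁+n,…,μ_n+n) can be made non-increasing by the exchange action. Let k be the largest integer with λ_{m−k+1}+k ≤ μ_n (with λ_{m+1}:=0). Then N(δ) = n·k + N(λ₁,…,λ_{m−k}, μ₁+n−k,…,μ_{n−1}+n−k). -/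
/-- Extension of a finite sequence by zeros (so `extSeq lam i` is the 0-indexed
part `λ_{i+1}`, with `λ_j = 0` for `j` beyond the number of parts). -/
def extSeq {m : ℕ} (lam : Fin m → ℕ) : ℕ → ℕ :=
  fun i => if h : i < m then lam ⟨i, h⟩ else 0

lemma append_left' {m n : ℕ} {α : Sort*} (a : Fin m → α) (b : Fin n → α)
    (q : Fin (m + n)) (h : (q : ℕ) < m) : Fin.append a b q = a ⟨q, h⟩ := by
  simp [Fin.append, Fin.addCases, h, Fin.castLT]

lemma append_right' {m n : ℕ} {α : Sort*} (a : Fin m → α) (b : Fin n → α)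
    (q : Fin (m + n)) (h : ¬ (q : ℕ) < m) :
    Fin.append a b q = b ⟨(q : ℕ) - m, by omega⟩ := by
  simp [Fin.append, Fin.addCases, h, Fin.subNat]

lemma exchNum_append {m n : ℕ} (a : Fin m → ℤ) (b : Fin n → ℤ)
    (ha : ∀ i j : Fin m, i < j → a j - (j : ℤ) ≤ a i - (i : ℤ))
    (hb : ∀ i j : Fin n, i < j → b j - (j : ℤ) ≤ b i - (i : ℤ)) :
    exchNum (Fin.append a b) =
      (Finset.univ.filter (fun p : Fin m × Fin n =>
        a p.1 - (p.1 : ℤ) < b p.2 - ((m : ℤ) + (p.2 : ℤ)))).card := by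
  classical
  unfold exchNum
  have hinj : Function.Injective
      (fun p : Fin m × Fin n => (Fin.castAdd n p.1, Fin.natAdd m p.2)) := by
    rintro ⟨i1, j1⟩ ⟨i2, j2⟩ h
    have h1 : (Fin.castAdd n i1) = Fin.castAdd n i2 := congrArg Prod.fst h
    have h2 : (Fin.natAdd m j1) = Fin.natAdd m j2 := congrArg Prod.snd h
    have h1' : (i1 : ℕ) = i2 := by simpa using congrArg Fin.val h1
    have h2' : (j1 : ℕ) = j2 := by simpa using congrArg Fin.val h2
    exact Prod.ext (Fin.ext h1') (Fin.ext h2')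
  have himg : (Finset.univ.filter (fun p : Fin (m+n) × Fin (m+n) =>
        p.1 < p.2 ∧ Fin.append a b p.1 - (p.1 : ℤ) < Fin.append a b p.2 - (p.2 : ℤ)))
      = Finset.image (fun p : Fin m × Fin n => (Fin.castAdd n p.1, Fin.natAdd m p.2))
          (Finset.univ.filter (fun p : Fin m × Fin n =>
            a p.1 - (p.1 : ℤ) < b p.2 - ((m : ℤ) + (p.2 : ℤ)))) := by
    ext ⟨q1, q2⟩
    simp only [Finset.mem_filter, Finset.mem_image, Finset.mem_univ, true_and, Prod.mk.injEq,
      Prod.exists]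
    constructor
    · rintro ⟨hlt, hinv⟩
      have hlt' : (q1 : ℕ) < (q2 : ℕ) := hlt
      by_cases h1 : (q1 : ℕ) < m
      · by_cases h2 : (q2 : ℕ) < m
        · exfalso
          rw [append_left' a b q1 h1, append_left' a b q2 h2] at hinv
          have := ha ⟨q1, h1⟩ ⟨q2, h2⟩ (by exact hlt')
          simp only at this
          omega
        · refine ⟨⟨(q1 : ℕ), h1⟩, ⟨(q2 : ℕ) - m, by omega⟩, ?_, Fin.ext rfl, Fin.ext (by simp; omega)⟩
          rw [append_left' a b q1 h1, append_right' a b q2 h2] at hinv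
          simp only at hinv ⊢
          have : (((q2 : ℕ) - m : ℕ) : ℤ) = (q2 : ℤ) - m := by omega
          omega
      · exfalso
        have h2 : ¬ (q2 : ℕ) < m := by omega
        rw [append_right' a b q1 h1, append_right' a b q2 h2] at hinv
        have := hb ⟨(q1 : ℕ) - m, by omega⟩ ⟨(q2 : ℕ) - m, by omega⟩ (by simp [Fin.lt_def]; omega)
        simp only at this
        have c1 : (((q1 : ℕ) - m : ℕ) : ℤ) = (q1 : ℤ) - m := by omega
        have c2 : (((q2 : ℕ) - m : ℕ) : ℤ) = (q2 : ℤ) - m := by omega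
        omega
    · rintro ⟨i, j, hQ, rfl, rfl⟩
      constructor
      · simp [Fin.lt_def]; omega
      · rw [Fin.append_left, Fin.append_right]
        simp only [Fin.coe_castAdd, Fin.coe_natAdd]
        push_cast
        omega
  rw [himg, Finset.card_image_of_injective _ hinj]

theorem stmt_15 {m n : ℕ} (hn : 0 < n) (lam : Fin m → ℕ) (mu : Fin n → ℕ)
    (hlam : Antitone lam) (hmu : Antitone mu)
    (δ : Fin (m + n) → ℤ)
    (hδ : δ = Fin.append (fun i => (lam i : ℤ)) (fun j => (mu j : ℤ) + (n : ℤ)))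
    (hsort : Sortable δ)
    (kk : ℕ)
    (hk : kk = Nat.findGreatest
      (fun j => extSeq lam (m - j) + j ≤ extSeq mu (n - 1)) m) :
    exchNum δ = n * kk +
      exchNum (Fin.append
        (fun i : Fin (m - kk) => (extSeq lam (i : ℕ) : ℤ))
        (fun j : Fin (n - 1) => (extSeq mu (j : ℕ) : ℤ) + (n : ℤ) - (kk : ℤ))) := by
  classical
  -- extended sequences are antitone
  have hextl : ∀ i j : ℕ, i ≤ j → extSeq lam j ≤ extSeq lam i := by
    intro i j hij
    unfold extSeq
    by_cases hj : j < m
    · have hi : i < m := lt_of_le_of_lt hij hj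
      rw [dif_pos hj, dif_pos hi]
      exact hlam (show (⟨i, hi⟩ : Fin m) ≤ ⟨j, hj⟩ from hij)
    · rw [dif_neg hj]; exact Nat.zero_le _
  have hextm : ∀ i j : ℕ, i ≤ j → extSeq mu j ≤ extSeq mu i := by
    intro i j hij
    unfold extSeq
    by_cases hj : j < n
    · have hi : i < n := lt_of_le_of_lt hij hj
      rw [dif_pos hj, dif_pos hi]
      exact hmu (show (⟨i, hi⟩ : Fin n) ≤ ⟨j, hj⟩ from hij)
    · rw [dif_neg hj]; exact Nat.zero_le _
  -- facts about kk
  have hkm : kk ≤ m := hk ▸ Nat.findGreatest_le m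
  have hP0 : extSeq lam (m - 0) + 0 ≤ extSeq mu (n - 1) := by
    rw [Nat.sub_zero]
    have : extSeq lam m = 0 := by unfold extSeq; rw [dif_neg (lt_irrefl m)]
    omega
  have hPkk : extSeq lam (m - kk) + kk ≤ extSeq mu (n - 1) := by
    rw [hk]
    exact Nat.findGreatest_spec
      (P := fun j => extSeq lam (m - j) + j ≤ extSeq mu (n - 1)) (Nat.zero_le m) hP0
  have hPall : ∀ t, t ≤ kk → extSeq lam (m - t) + t ≤ extSeq mu (n - 1) := by
    have hdown : ∀ d, d ≤ kk → extSeq lam (m - (kk - d)) + (kk - d) ≤ extSeq mu (n - 1) := by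
      intro d
      induction d with
      | zero => intro _; simpa using hPkk
      | succ e ih =>
        intro hd
        have h1 := ih (by omega)
        have h2 := hextl (m - (kk - e)) (m - (kk - (e+1))) (by omega)
        omega
    intro t ht
    have h := hdown (kk - t) (by omega)
    rw [show kk - (kk - t) = t by omega] at h
    exact h
  have hnP : ∀ t, kk < t → t ≤ m → ¬ (extSeq lam (m - t) + t ≤ extSeq mu (n - 1)) := by
    intro t h1 h2
    exact Nat.findGreatest_is_greatest
      (P := fun j => extSeq lam (m - j) + j ≤ extSeq mu (n - 1)) (hk ▸ h1) h2
  -- the key indicator-level facts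
  have fact1 : ∀ i j : ℕ, m - kk ≤ i → i < m → j < n →
      ((extSeq lam i : ℤ) - i < (extSeq mu j : ℤ) + n - m - j) := by
    intro i j h1 h2 h3
    have ht := hPall (m - i) (by omega)
    have he : m - (m - i) = i := by omega
    rw [he] at ht
    have hj : extSeq mu (n - 1) ≤ extSeq mu j := hextm j (n - 1) (by omega)
    omega
  have fact2 : ∀ i : ℕ, i < m - kk →
      ¬ ((extSeq lam i : ℤ) - i < (extSeq mu (n-1) : ℤ) + n - m - (n - 1 : ℕ)) := by
    intro i h
    have ht := hnP (m - i) (by omega) (by omega)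
    have he : m - (m - i) = i := by omega
    rw [he] at ht
    omega
  -- the indicator function
  set g : ℕ → ℕ → ℕ := fun i j =>
    if (extSeq lam i : ℤ) - i < (extSeq mu j : ℤ) + n - m - j then 1 else 0 with hg
  -- left side
  have hL : exchNum δ = ∑ i ∈ Finset.range m, ∑ j ∈ Finset.range n, g i j := by
    rw [hδ, exchNum_append]
    · rw [Finset.card_filter, Fintype.sum_prod_type]
      have step1 : ∀ i : Fin m,
          (∑ j : Fin n, if (lam i : ℤ) - i < ((mu j : ℤ) + n) - ((m : ℤ) + j) then 1 else 0)
          = ∑ j ∈ Finset.range n, g (i : ℕ) j := by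
        intro i
        rw [← Fin.sum_univ_eq_sum_range (fun j => g (i : ℕ) j) n]
        apply Finset.sum_congr rfl
        intro j _
        have el : extSeq lam (i : ℕ) = lam i := by
          unfold extSeq; rw [dif_pos i.isLt]
        have em : extSeq mu (j : ℕ) = mu j := by
          unfold extSeq; rw [dif_pos j.isLt]
        rw [hg]
        simp only [el, em]
        congr 1
        rw [eq_iff_iff]
        constructor <;> intro <;> omega
      calc (∑ i : Fin m, ∑ j : Fin n,
              if (lam i : ℤ) - i < ((mu j : ℤ) + n) - ((m : ℤ) + j) then 1 else 0)
          = ∑ i : Fin m, ∑ j ∈ Finset.range n, g (i : ℕ) j :=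
            Finset.sum_congr rfl (fun i _ => step1 i)
        _ = ∑ i ∈ Finset.range m, ∑ j ∈ Finset.range n, g i j :=
            Fin.sum_univ_eq_sum_range (fun i => ∑ j ∈ Finset.range n, g i j) m
    · intro i j hij
      have := hlam (le_of_lt hij)
      have hij' : (i : ℕ) < j := hij
      push_cast
      omega
    · intro i j hij
      have := hmu (le_of_lt hij)
      have hij' : (i : ℕ) < j := hij
      push_cast
      omega
  -- right side
  have hR : exchNum (Fin.append
        (fun i : Fin (m - kk) => (extSeq lam (i : ℕ) : ℤ))
        (fun j : Fin (n - 1) => (extSeq mu (j : ℕ) : ℤ) + (n : ℤ) - (kk : ℤ)))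
      = ∑ i ∈ Finset.range (m - kk), ∑ j ∈ Finset.range (n - 1), g i j := by
    rw [exchNum_append]
    · rw [Finset.card_filter, Fintype.sum_prod_type]
      have step1 : ∀ i : Fin (m - kk),
          (∑ j : Fin (n - 1), if (extSeq lam (i : ℕ) : ℤ) - i <
              ((extSeq mu (j : ℕ) : ℤ) + n - kk) - (((m - kk : ℕ) : ℤ) + j) then 1 else 0)
          = ∑ j ∈ Finset.range (n - 1), g (i : ℕ) j := by
        intro i
        rw [← Fin.sum_univ_eq_sum_range (fun j => g (i : ℕ) j) (n - 1)]
        apply Finset.sum_congr rfl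
        intro j _
        rw [hg]
        congr 1
        rw [eq_iff_iff]
        constructor <;> intro <;> omega
      calc (∑ i : Fin (m - kk), ∑ j : Fin (n - 1),
              if (extSeq lam (i : ℕ) : ℤ) - i <
                ((extSeq mu (j : ℕ) : ℤ) + n - kk) - (((m - kk : ℕ) : ℤ) + j) then 1 else 0)
          = ∑ i : Fin (m - kk), ∑ j ∈ Finset.range (n - 1), g (i : ℕ) j :=
            Finset.sum_congr rfl (fun i _ => step1 i)
        _ = ∑ i ∈ Finset.range (m - kk), ∑ j ∈ Finset.range (n - 1), g i j :=
            Fin.sum_univ_eq_sum_range (fun i => ∑ j ∈ Finset.range (n - 1), g i j) (m - kk)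
    · intro i j hij
      have := hextl (i : ℕ) (j : ℕ) (le_of_lt hij)
      have hij' : (i : ℕ) < j := hij
      omega
    · intro i j hij
      have := hextm (i : ℕ) (j : ℕ) (le_of_lt hij)
      have hij' : (i : ℕ) < j := hij
      omega
  rw [hL, hR]
  -- now pure counting
  have split_i : ∑ i ∈ Finset.range m, ∑ j ∈ Finset.range n, g i j
      = (∑ i ∈ Finset.range (m - kk), ∑ j ∈ Finset.range n, g i j)
        + ∑ i ∈ Finset.Ico (m - kk) m, ∑ j ∈ Finset.range n, g i j := by
    rw [Finset.range_eq_Ico,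
      ← Finset.sum_Ico_consecutive _ (Nat.zero_le (m - kk)) (by omega : m - kk ≤ m),
      ← Finset.range_eq_Ico]
  have inner_full : ∀ i ∈ Finset.Ico (m - kk) m, (∑ j ∈ Finset.range n, g i j) = n := by
    intro i hi
    rw [Finset.mem_Ico] at hi
    have : ∀ j ∈ Finset.range n, g i j = 1 := by
      intro j hj
      rw [Finset.mem_range] at hj
      rw [hg]
      exact if_pos (fact1 i j hi.1 hi.2 hj)
    rw [Finset.sum_congr rfl this, Finset.sum_const, Finset.card_range, smul_eq_mul, mul_one]
  have sum_right : ∑ i ∈ Finset.Ico (m - kk) m, ∑ j ∈ Finset.range n, g i j = kk * n := by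
    rw [Finset.sum_congr rfl inner_full, Finset.sum_const, Nat.card_Ico, smul_eq_mul]
    congr 1
    omega
  have split_j : ∀ i : ℕ, ∑ j ∈ Finset.range n, g i j
      = (∑ j ∈ Finset.range (n - 1), g i j) + g i (n - 1) := by
    intro i
    conv_lhs => rw [show n = (n - 1) + 1 by omega]
    rw [Finset.sum_range_succ]
  have inner_left : ∀ i ∈ Finset.range (m - kk),
      (∑ j ∈ Finset.range n, g i j) = ∑ j ∈ Finset.range (n - 1), g i j := by
    intro i hi
    rw [Finset.mem_range] at hi
    rw [split_j i]
    have : g i (n - 1) = 0 := by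
      rw [hg]
      exact if_neg (fact2 i hi)
    omega
  rw [split_i, sum_right, Finset.sum_congr rfl inner_left]
  ring
end
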